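/- For the two-agent one-dimensional HK system with |x_{1,0}-x_{2,0}|=1, the only classical solution (differentiable everywhere and satisfying the equation at every time) is the constant solution x(t)≡x(0). -/

import Mathlib

open Real Set Filter Topology

/-- For the two-agent 1D HK system with `|x₁(0) - x₂(0)| = 1`, the only classical solution
(differentiable and satisfying the equation at every time `t ≥ 0`, with one-sided derivatives
at `0`) is the constant one. -/
theorem stmt_2 (x1 x2 : ℝ → ℝ)
    (h0 : |x1 0 - x2 0| = 1)
    (hsol : ∀ t ≥ (0:ℝ),
      HasDerivWithinAt x1 ((if |x1 t - x2 t| < 1 then (1:ℝ) else 0) * (x2 t - x1 t))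
        (Set.Ici 0) t ∧
      HasDerivWithinAt x2 ((if |x1 t - x2 t| < 1 then (1:ℝ) else 0) * (x1 t - x2 t))
        (Set.Ici 0) t) :
    ∀ t ≥ (0:ℝ), x1 t = x1 0 ∧ x2 t = x2 0 := by
  set f : ℝ → ℝ := fun u => (x1 u - x2 u) ^ 2 with hfdef
  have hf : ∀ t ≥ (0:ℝ), HasDerivWithinAt f
      ((if |x1 t - x2 t| < 1 then (1:ℝ) else 0) * (-4 * f t)) (Ici 0) t := by
    intro t ht
    have hd : HasDerivWithinAt (fun u => x1 u - x2 u)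
        ((if |x1 t - x2 t| < 1 then (1:ℝ) else 0) * (x2 t - x1 t)
          - (if |x1 t - x2 t| < 1 then (1:ℝ) else 0) * (x1 t - x2 t)) (Ici 0) t :=
      (hsol t ht).1.sub (hsol t ht).2
    have := hd.pow 2
    refine this.congr_deriv ?_
    simp only [hfdef]
    ring
  have hf0 : f 0 = 1 := by
    simp only [hfdef]
    rw [← sq_abs, h0]; norm_num
  have hfc : ContinuousOn f (Ici 0) := fun u hu => (hf u hu).continuousWithinAt
  -- key claim : f t ≥ 1 for all t ≥ 0
  have key : ∀ t ≥ (0:ℝ), 1 ≤ f t := by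
    by_contra h
    push_neg at h
    obtain ⟨t0, ht0, hlt⟩ := h
    have ht0pos : 0 < t0 := by
      rcases lt_or_eq_of_le ht0 with h' | h'
      · exact h'
      · exfalso; rw [← h', hf0] at hlt; linarith
    set A : Set ℝ := {u | u ∈ Icc 0 t0 ∧ 1 ≤ f u} with hAdef
    have hA0 : (0:ℝ) ∈ A := ⟨⟨le_refl 0, ht0⟩, by rw [hf0]⟩
    have hAclosed : IsClosed A := by
      have : A = Icc 0 t0 ∩ f ⁻¹' (Ici 1) := by
        ext u; simp [hAdef, and_comm]
      rw [this]
      exact (hfc.mono Icc_subset_Ici_self).preimage_isClosed_of_isClosed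
        isClosed_Icc isClosed_Ici
    have hAcomp : IsCompact A :=
      isCompact_Icc.of_isClosed_subset hAclosed (fun u hu => hu.1)
    set s := sSup A with hsdef
    have hsA : s ∈ A := hAcomp.sSup_mem ⟨0, hA0⟩
    have hs0 : 0 ≤ s := hsA.1.1
    have hfs : 1 ≤ f s := hsA.2
    have hst0 : s < t0 := by
      rcases lt_or_eq_of_le hsA.1.2 with h' | h'
      · exact h'
      · exfalso; rw [h'] at hfs; linarith
    have hub : ∀ u ∈ Ioc s t0, f u < 1 := by
      intro u hu
      by_contra hge
      push_neg at hge
      have : u ∈ A := ⟨⟨le_trans hs0 hu.1.le, hu.2⟩, hge⟩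
      exact absurd (le_csSup hAcomp.bddAbove this) (not_le.mpr hu.1)
    set G : ℝ → ℝ := fun u => f u * Real.exp (4 * u) with hGdef
    have hGc : ContinuousOn G (Ici 0) :=
      hfc.mul (Real.continuous_exp.comp (continuous_const.mul continuous_id)).continuousOn
    have hGd : ∀ u ∈ Ioc s t0, HasDerivWithinAt G 0 (Ici u) u := by
      intro u hu
      have hu0 : (0:ℝ) ≤ u := le_trans hs0 hu.1.le
      have hflt : (x1 u - x2 u) ^ 2 < 1 := hub u hu
      have habs : |x1 u - x2 u| < 1 := by
        nlinarith [sq_abs (x1 u - x2 u), abs_nonneg (x1 u - x2 u)]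
      have hexp : HasDerivWithinAt (fun u => Real.exp (4 * u))
          (Real.exp (4 * u) * 4) (Ici 0) u := by
        have : HasDerivAt (fun u : ℝ => Real.exp (4 * u)) (Real.exp (4 * u) * 4) u := by
          simpa using (HasDerivAt.exp ((hasDerivAt_id u).const_mul 4))
        exact this.hasDerivWithinAt
      have := ((hf u hu0).mul hexp).mono (Ici_subset_Ici.mpr hu0)
      refine this.congr_deriv ?_
      rw [if_pos habs]
      ring
    have hGconst : ∀ u ∈ Ioc s t0, G u = G t0 := by
      intro u hu
      have hu0 : (0:ℝ) ≤ u := le_trans hs0 hu.1.le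
      have hcont : ContinuousOn G (Icc u t0) :=
        hGc.mono (fun v hv => le_trans hu0 hv.1)
      have hder : ∀ v ∈ Ico u t0, HasDerivWithinAt G 0 (Ici v) v :=
        fun v hv => hGd v ⟨lt_of_lt_of_le hu.1 hv.1, hv.2.le⟩
      exact (constant_of_has_deriv_right_zero hcont hder t0
        ⟨hu.2, le_refl _⟩).symm
    have hGs : G s = G t0 := by
      have hne : (𝓝[Ioc s t0] s).NeBot := by
        rw [nhdsWithin_Ioc_eq_nhdsGT hst0]
        infer_instance
      have h1 : Tendsto G (𝓝[Ioc s t0] s) (𝓝 (G s)) :=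
        (hGc s hs0).tendsto.mono_left
          (nhdsWithin_mono s (fun v hv => le_trans hs0 hv.1.le))
      have h2 : Tendsto G (𝓝[Ioc s t0] s) (𝓝 (G t0)) := by
        refine Tendsto.congr' ?_ tendsto_const_nhds
        filter_upwards [eventually_mem_nhdsWithin] with v hv
        exact (hGconst v hv).symm
      exact tendsto_nhds_unique h1 h2
    have hfeq : ∀ u ∈ Icc s t0, f u = G t0 * Real.exp (-(4 * u)) := by
      intro u hu
      have hGu : G u = G t0 := by
        rcases eq_or_lt_of_le hu.1 with h' | h'
        · rw [← h']; exact hGs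
        · exact hGconst u ⟨h', hu.2⟩
      rw [Real.exp_neg, ← hGu]
      simp only [hGdef]
      field_simp
    have hnabs : ¬ |x1 s - x2 s| < 1 := by
      simp only [not_lt]
      have hfs' : (1:ℝ) ≤ (x1 s - x2 s) ^ 2 := hfs
      nlinarith [sq_abs (x1 s - x2 s), abs_nonneg (x1 s - x2 s)]
    have hf0' : HasDerivWithinAt f 0 (Icc s t0) s := by
      have := (hf s hs0).mono (show Icc s t0 ⊆ Ici 0 from Subset.trans Icc_subset_Ici_self (Ici_subset_Ici.mpr hs0))
      rwa [if_neg hnabs, zero_mul] at this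
    have hF : HasDerivWithinAt (fun u => G t0 * Real.exp (-(4 * u)))
        (G t0 * (Real.exp (-(4 * s)) * (-4))) (Icc s t0) s := by
      have : HasDerivAt (fun u : ℝ => Real.exp (-(4 * u)))
          (Real.exp (-(4 * s)) * (-4)) s := by
        simpa using (HasDerivAt.exp (((hasDerivAt_id s).const_mul 4).neg))
      exact (this.const_mul (G t0)).hasDerivWithinAt
    have hF0 : HasDerivWithinAt (fun u => G t0 * Real.exp (-(4 * u))) 0 (Icc s t0) s :=
      hf0'.congr (fun u hu => (hfeq u hu).symm) (hfeq s ⟨le_refl _, hst0.le⟩).symm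
    have hud : UniqueDiffWithinAt ℝ (Icc s t0) s :=
      uniqueDiffOn_Icc hst0 s ⟨le_refl _, hst0.le⟩
    have heq : G t0 * (Real.exp (-(4 * s)) * (-4)) = 0 := by
      rw [← hF.derivWithin hud, hF0.derivWithin hud]
    have hGt0pos : 0 < G t0 := by
      rw [← hGs]
      show 0 < f s * Real.exp (4 * s)
      exact mul_pos (by linarith) (Real.exp_pos _)
    nlinarith [mul_pos hGt0pos (Real.exp_pos (-(4 * s)))]
  -- the indicator is always 0, so both derivatives vanish
  intro t ht
  have hind : ∀ u, 0 ≤ u → ¬ |x1 u - x2 u| < 1 := by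
    intro u hu
    simp only [not_lt]
    have hfu : (1:ℝ) ≤ (x1 u - x2 u) ^ 2 := key u hu
    nlinarith [sq_abs (x1 u - x2 u), abs_nonneg (x1 u - x2 u)]
  have hder1 : ∀ u ∈ Ico (0:ℝ) t, HasDerivWithinAt x1 0 (Ici u) u := by
    intro u hu
    have := ((hsol u hu.1).1).mono (Ici_subset_Ici.mpr hu.1)
    rwa [if_neg (hind u hu.1), zero_mul] at this
  have hder2 : ∀ u ∈ Ico (0:ℝ) t, HasDerivWithinAt x2 0 (Ici u) u := by
    intro u hu
    have := ((hsol u hu.1).2).mono (Ici_subset_Ici.mpr hu.1)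
    rwa [if_neg (hind u hu.1), zero_mul] at this
  have hc1 : ContinuousOn x1 (Icc 0 t) := by
    intro u hu
    exact ((hsol u hu.1).1.continuousWithinAt).mono Icc_subset_Ici_self
  have hc2 : ContinuousOn x2 (Icc 0 t) := by
    intro u hu
    exact ((hsol u hu.1).2.continuousWithinAt).mono Icc_subset_Ici_self
  exact ⟨constant_of_has_deriv_right_zero hc1 hder1 t ⟨ht, le_refl _⟩,
    constant_of_has_deriv_right_zero hc2 hder2 t ⟨ht, le_refl _⟩⟩
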